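/- Fix β > 1. Among any n+1 consecutive cylinders of order n (cylinders indexed by consecutive admissible words in lexicographic order), at least one is a full cylinder. -/

import Mathlib

open MeasureTheory Set
open scoped Classical

/-- The beta-transformation `T_β x = βx - ⌊βx⌋`. -/
noncomputable def betaT (β x : ℝ) : ℝ := Int.fract (β * x)

/-- The `k`-th digit (0-indexed) of the β-expansion of `x`: `ε_{k+1}(x,β) = ⌊β T_β^k x⌋`. -/
noncomputable def betaDigit (β x : ℝ) (k : ℕ) : ℕ := ⌊β * (betaT β)^[k] x⌋₊

/-- `Σ_n(β)`: admissible words of length `n`, i.e. prefixes of β-expansions of points of `[0,1)`. -/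
def admWords (β : ℝ) (n : ℕ) : Set (Fin n → ℕ) :=
  {w | ∃ x ∈ Set.Ico (0:ℝ) 1, ∀ i : Fin n, w i = betaDigit β x i}

/-- The cylinder `𝔍(w)` of points of `[0,1)` whose β-expansion starts with `w`. -/
def cyl (β : ℝ) {n : ℕ} (w : Fin n → ℕ) : Set ℝ :=
  {x | x ∈ Set.Ico (0:ℝ) 1 ∧ ∀ i : Fin n, betaDigit β x i = w i}

/-- `Ξ_n(β)`: admissible words of length `n` whose cylinder is full (of length `β^{-n}`). -/
def fullWords (β : ℝ) (n : ℕ) : Set (Fin n → ℕ) :=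
  {w | w ∈ admWords β n ∧ volume (cyl β w) = ENNReal.ofReal (1 / β ^ n)}

/-- `ε(β)`: the β-expansion of 1 (0-indexed). -/
noncomputable def eps1 (β : ℝ) (k : ℕ) : ℕ := betaDigit β 1 k

/-- `ε*(β)`: the infinite β-expansion of 1.  If `ε(β)` has a last nonzero digit at
(0-indexed) position `N`, it is the periodic sequence `(ε_0 ⋯ ε_{N-1} (ε_N - 1))^∞`;
otherwise it is `ε(β)` itself. -/

noncomputable def epsStar (β : ℝ) : ℕ → ℕ :=
  if h : ∃ N, eps1 β N ≠ 0 ∧ ∀ k, N < k → eps1 β k = 0 then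
    fun k => if k % (h.choose + 1) = h.choose then eps1 β h.choose - 1
             else eps1 β (k % (h.choose + 1))
  else eps1 β

/-- Strict lexicographic order on sequences of nonnegative integers. -/
def lexLt (a b : ℕ → ℕ) : Prop := ∃ i, (∀ j, j < i → a j = b j) ∧ a i < b i

/-- Strict lexicographic order on words of length `n`. -/
def wordLt {n : ℕ} (a b : Fin n → ℕ) : Prop :=
  ∃ i : Fin n, (∀ j, j < i → a j = b j) ∧ a i < b i

/-- `Ω_n(x)`: all length-`n` prefixes of β-expansions of `x` over all bases `β > 1`. -/
def prefWords (x : ℝ) (n : ℕ) : Set (Fin n → ℕ) :=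
  {w | ∃ β : ℝ, 1 < β ∧ ∀ i : Fin n, w i = betaDigit β x i}

/-- The parameter cylinder `I(w) = {β > 1 : ε_1(x,β)⋯ε_n(x,β) = w}`. -/
def pcyl (x : ℝ) {n : ℕ} (w : Fin n → ℕ) : Set ℝ :=
  {β | 1 < β ∧ ∀ i : Fin n, betaDigit β x i = w i}

/-- `Λ_n(x)`: words whose parameter cylinder is full, i.e. `{T_β^n x : β ∈ I(w)} = [0,1)`. -/
def pfull (x : ℝ) (n : ℕ) : Set (Fin n → ℕ) :=
  {w | w ∈ prefWords x n ∧ (fun β => (betaT β)^[n] x) '' pcyl x w = Set.Ico (0:ℝ) 1}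

namespace BetaAux

/-- value of a word: `∑ w i β^{-(i+1)}`, defined recursively. -/
noncomputable def bval (β : ℝ) : {n : ℕ} → (Fin n → ℕ) → ℝ
  | 0, _ => 0
  | _ + 1, w => ((w 0 : ℝ) + bval β (fun i => w i.succ)) / β

lemma betaT_mem (β x : ℝ) : betaT β x ∈ Ico (0:ℝ) 1 :=
  ⟨Int.fract_nonneg _, Int.fract_lt_one _⟩

lemma iter_mem (β : ℝ) {x : ℝ} (hx : x ∈ Ico (0:ℝ) 1) (k : ℕ) :
    (betaT β)^[k] x ∈ Ico (0:ℝ) 1 := by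
  cases k with
  | zero => exact hx
  | succ k => rw [Function.iterate_succ_apply']; exact betaT_mem _ _

lemma digit_succ (β x : ℝ) (k : ℕ) :
    betaDigit β x (k + 1) = betaDigit β (betaT β x) k := by
  simp [betaDigit, Function.iterate_succ_apply]

lemma fract_eq_sub_natFloor {a : ℝ} (ha : 0 ≤ a) : Int.fract a = a - ⌊a⌋₊ := by
  rw [Int.fract, natCast_floor_eq_intCast_floor ha]

lemma digit_id {β x : ℝ} (hβ : 1 < β) (hx : x ∈ Ico (0:ℝ) 1) :
    β * x = (betaDigit β x 0 : ℝ) + betaT β x := by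
  have h0 : (0:ℝ) ≤ β * x := mul_nonneg (by linarith) hx.1
  have : betaDigit β x 0 = ⌊β * x⌋₊ := by simp [betaDigit]
  rw [this, betaT, fract_eq_sub_natFloor h0]; ring

/-- digits of `x` as a word of length `n`. -/
noncomputable def dig (β x : ℝ) (n : ℕ) : Fin n → ℕ := fun i => betaDigit β x i

lemma dig_tail (β x : ℝ) (n : ℕ) :
    (fun i : Fin n => dig β x (n+1) i.succ) = dig β (betaT β x) n := by
  funext i; simp [dig, digit_succ]

lemma bval_nonneg {β : ℝ} (hβ : 1 < β) : ∀ {n : ℕ} (w : Fin n → ℕ), 0 ≤ bval β w := by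
  intro n
  induction n with
  | zero => intro w; simp [bval]
  | succ n ih =>
    intro w
    have := ih (fun i => w i.succ)
    have : (0:ℝ) ≤ (w 0 : ℝ) + bval β (fun i => w i.succ) := by positivity
    exact div_nonneg this (by linarith)

lemma expand {β : ℝ} (hβ : 1 < β) :
    ∀ (n : ℕ) {x : ℝ}, x ∈ Ico (0:ℝ) 1 →
      x = bval β (dig β x n) + (betaT β)^[n] x / β ^ n := by
  intro n
  induction n with
  | zero => intro x hx; simp [bval]
  | succ n ih =>
    intro x hx
    have hy := betaT_mem β x
    have hrec := ih hy
    have hβ0 : (0:ℝ) < β := by linarith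
    have hid := digit_id hβ hx
    have hd0 : dig β x (n+1) 0 = betaDigit β x 0 := rfl
    have hbv : bval β (dig β x (n+1))
        = ((betaDigit β x 0 : ℝ) + bval β (dig β (betaT β x) n)) / β := by
      rw [bval, dig_tail, hd0]
    rw [hbv, Function.iterate_succ_apply]
    have hβ' : (β:ℝ) ≠ 0 := by linarith
    have hβn : (β:ℝ)^n ≠ 0 := by positivity
    have hrec2 : β^n * betaT β x = β^n * bval β (dig β (betaT β x) n)
        + (betaT β)^[n] (betaT β x) := by
      have := congrArg (fun t => β^n * t) hrec
      simpa [mul_add, mul_div_cancel₀, hβn] using this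
    field_simp
    linear_combination β^(n+1) * hid + β * hrec2

lemma bval_dig_le {β : ℝ} (hβ : 1 < β) (n : ℕ) {x : ℝ} (hx : x ∈ Ico (0:ℝ) 1) :
    bval β (dig β x n) ≤ x := by
  have h := expand hβ n hx
  have h1 : 0 ≤ (betaT β)^[n] x / β ^ n :=
    div_nonneg (iter_mem β hx n).1 (by positivity)
  linarith

lemma lt_bval_dig_add {β : ℝ} (hβ : 1 < β) (n : ℕ) {x : ℝ} (hx : x ∈ Ico (0:ℝ) 1) :
    x < bval β (dig β x n) + 1 / β ^ n := by
  have h := expand hβ n hx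
  have hp : (0:ℝ) < β ^ n := by positivity
  have h1 : (betaT β)^[n] x / β ^ n < 1 / β ^ n :=
    (div_lt_div_iff_of_pos_right hp).mpr (iter_mem β hx n).2
  linarith

end BetaAux

namespace B2
open BetaAux

lemma bval_succ (β : ℝ) {n : ℕ} (w : Fin (n+1) → ℕ) :
    bval β w = ((w 0 : ℝ) + bval β (fun i => w i.succ)) / β := rfl

lemma adm_tail {β : ℝ} {n : ℕ} {w : Fin (n+1) → ℕ} (h : w ∈ admWords β (n+1)) :
    (fun i : Fin n => w i.succ) ∈ admWords β n := by
  obtain ⟨x, hx, hw⟩ := h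
  exact ⟨betaT β x, betaT_mem β x, fun i => by
    have := hw i.succ
    simpa [digit_succ] using this⟩

lemma bval_lt_one {β : ℝ} (hβ : 1 < β) {n : ℕ} {w : Fin n → ℕ}
    (h : w ∈ admWords β n) : bval β w ∈ Ico (0:ℝ) 1 := by
  obtain ⟨x, hx, hw⟩ := h
  have hdig : dig β x n = w := by funext i; exact (hw i).symm
  refine ⟨bval_nonneg hβ w, ?_⟩
  calc bval β w = bval β (dig β x n) := by rw [hdig]
    _ ≤ x := bval_dig_le hβ n hx
    _ < 1 := hx.2

/-- digits of `bval w` are `w`, for admissible `w`. -/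
lemma digits_bval {β : ℝ} (hβ : 1 < β) :
    ∀ {n : ℕ} {w : Fin n → ℕ}, w ∈ admWords β n →
      ∀ i : Fin n, betaDigit β (bval β w) i = w i := by
  intro n
  induction n with
  | zero => intro w _ i; exact i.elim0
  | succ n ih =>
    intro w hw i
    have htail : (fun i : Fin n => w i.succ) ∈ admWords β n := adm_tail hw
    have htv : bval β (fun i : Fin n => w i.succ) ∈ Ico (0:ℝ) 1 := bval_lt_one hβ htail
    set r := bval β (fun i : Fin n => w i.succ) with hr
    have hβ0 : (0:ℝ) < β := by linarith
    have hmul : β * bval β w = (w 0 : ℝ) + r := by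
      rw [bval_succ]; field_simp; rfl
    have hd0 : betaDigit β (bval β w) 0 = w 0 := by
      have : betaDigit β (bval β w) 0 = ⌊β * bval β w⌋₊ := by simp [betaDigit]
      rw [this, hmul]
      rw [Nat.floor_eq_iff (add_nonneg (Nat.cast_nonneg _) htv.1)]
      constructor
      · linarith [htv.1]
      · push_cast; linarith [htv.2]
    have hT : betaT β (bval β w) = r := by
      rw [betaT, hmul, Int.fract_natCast_add, Int.fract_eq_self.mpr ⟨htv.1, htv.2⟩]
    refine Fin.cases ?_ ?_ i
    · exact hd0
    · intro i
      rw [Fin.val_succ, digit_succ, hT]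
      exact ih htail i

lemma dig_bval {β : ℝ} (hβ : 1 < β) {n : ℕ} {w : Fin n → ℕ}
    (h : w ∈ admWords β n) : dig β (bval β w) n = w := by
  funext i; exact digits_bval hβ h i

lemma wordLt_irrefl {n : ℕ} (w : Fin n → ℕ) : ¬ wordLt w w := by
  rintro ⟨i, -, hlt⟩; exact lt_irrefl _ hlt

lemma wordLt_asymm {n : ℕ} {u v : Fin n → ℕ} (h1 : wordLt u v) (h2 : wordLt v u) : False := by
  obtain ⟨i, hi, hlt⟩ := h1
  obtain ⟨i', hi', hlt'⟩ := h2
  rcases lt_trichotomy i i' with h | h | h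
  · exact absurd (hi' i h).symm (ne_of_lt hlt)
  · subst h; omega
  · exact absurd (hi i' h).symm (ne_of_lt hlt')

/-- digit monotonicity. -/
lemma dig_mono {β : ℝ} (hβ : 1 < β) :
    ∀ (n : ℕ) {x y : ℝ}, x ∈ Ico (0:ℝ) 1 → y ∈ Ico (0:ℝ) 1 → x ≤ y →
      dig β x n = dig β y n ∨ wordLt (dig β x n) (dig β y n) := by
  intro n
  induction n with
  | zero => intro x y _ _ _; left; funext i; exact i.elim0
  | succ n ih =>
    intro x y hx hy hxy
    have hβ0 : (0:ℝ) < β := by linarith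
    have hfl : betaDigit β x 0 ≤ betaDigit β y 0 := by
      simp only [betaDigit, Function.iterate_zero, id]
      exact Nat.floor_mono (by nlinarith)
    rcases lt_or_eq_of_le hfl with hlt | heq
    · right
      exact ⟨0, fun j hj => absurd hj (Fin.not_lt_zero j), hlt⟩
    · have hTx := digit_id hβ hx
      have hTy := digit_id hβ hy
      have hT : betaT β x ≤ betaT β y := by
        rw [heq] at hTx; nlinarith
      rcases ih (betaT_mem β x) (betaT_mem β y) hT with h | h
      · left
        funext i
        rcases Fin.eq_zero_or_eq_succ i with rfl | ⟨i', rfl⟩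
        · exact heq
        · have := congrFun h i'
          simpa [dig, Fin.val_succ, digit_succ] using this
      · right
        obtain ⟨i, hi, hlt⟩ := h
        refine ⟨i.succ, ?_, ?_⟩
        · intro j hj
          rcases Fin.eq_zero_or_eq_succ j with rfl | ⟨j', rfl⟩
          · exact heq
          · have hj2 : j' < i := by
              simpa [Fin.succ_lt_succ_iff] using hj
            have := hi j' hj2
            simpa [dig, Fin.val_succ, digit_succ] using this
        · have := hlt
          simpa [dig, Fin.val_succ, digit_succ] using this

lemma bval_fin0 (β : ℝ) (w : Fin 0 → ℕ) : bval β w = 0 := rfl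

lemma small_imp_zero {β : ℝ} (hβ : 1 < β) :
    ∀ (m : ℕ) (w : Fin m → ℕ), bval β w < 1 / β ^ m → ∀ i, w i = 0 := by
  intro m
  induction m with
  | zero => intro w _ i; exact i.elim0
  | succ m ih =>
    intro w hw i
    have hβ0 : (0:ℝ) < β := by linarith
    have hpm : (1:ℝ) ≤ β ^ m := one_le_pow₀ hβ.le
    have hpm1 : (0:ℝ) < β ^ (m+1) := by positivity
    have htail : (0:ℝ) ≤ bval β (fun i : Fin m => w i.succ) := bval_nonneg hβ _
    have hb : bval β w = ((w 0 : ℝ) + bval β (fun i : Fin m => w i.succ)) / β := rfl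
    have hble : ((w 0 : ℝ) + bval β (fun i : Fin m => w i.succ)) / β < 1 / β^(m+1) := by
      rw [← hb]; exact hw
    have hmul : ((w 0 : ℝ) + bval β (fun i : Fin m => w i.succ)) * β^(m+1) < β := by
      have := (div_lt_div_iff₀ hβ0 hpm1).mp hble
      linarith
    have hw0 : w 0 = 0 := by
      by_contra h0
      have h1 : (1:ℝ) ≤ (w 0 : ℝ) := by
        exact_mod_cast Nat.one_le_iff_ne_zero.mpr h0
      have h2 : β^(m+1) ≤ (↑(w 0) + bval β fun i => w i.succ) * β^(m+1) :=
        le_mul_of_one_le_left hpm1.le (by linarith)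
      have h3 : β^(m+1) = β^m * β := pow_succ β m
      nlinarith
    rcases Fin.eq_zero_or_eq_succ i with rfl | ⟨i', rfl⟩
    · exact hw0
    · apply ih (fun i : Fin m => w i.succ) ?_ i'
      rw [lt_div_iff₀ (by positivity : (0:ℝ) < β^m)]
      have hw0' : ((w 0 : ℝ)) = 0 := by rw [hw0]; norm_num
      rw [hw0'] at hmul
      have h3 : β^(m+1) = β^m * β := pow_succ β m
      nlinarith [pow_pos hβ0 m]

lemma exists_ne_zero_of_bval_pos {β : ℝ} (hβ : 1 < β) :
    ∀ {m : ℕ} {w : Fin m → ℕ}, 0 < bval β w → ∃ i, w i ≠ 0 := by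
  intro m
  induction m with
  | zero => intro w hw; rw [bval_fin0] at hw; exact absurd hw (lt_irrefl 0)
  | succ m ih =>
    intro w hw
    by_cases h0 : w 0 = 0
    · have hb : bval β w = ((w 0 : ℝ) + bval β (fun i : Fin m => w i.succ)) / β := rfl
      have hβ0 : (0:ℝ) < β := by linarith
      have : 0 < bval β (fun i : Fin m => w i.succ) := by
        rw [hb, h0] at hw
        push_cast at hw
        have := (div_pos_iff.mp hw)
        rcases this with ⟨h1, _⟩ | ⟨_, h2⟩
        · linarith
        · linarith
      obtain ⟨i, hi⟩ := ih this
      exact ⟨i.succ, hi⟩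
    · exact ⟨0, h0⟩

/-- The key combinatorial lemma: if consecutive admissible words `u < v` first differ
at position `j` and the gap `bval v - bval u` is less than `β^{-n}`, then
`j + 1 < n`, `v` vanishes after `j`, and `u` does not vanish after `j`. -/
lemma key {β : ℝ} (hβ : 1 < β) :
    ∀ (n : ℕ) (u v : Fin n → ℕ), u ∈ admWords β n →
      ∀ (j : Fin n), (∀ i, i < j → u i = v i) → u j < v j →
      bval β v - bval β u < 1 / β ^ n →
      ((j:ℕ) + 1 < n ∧ (∀ i, j < i → v i = 0) ∧ ∃ i, j < i ∧ u i ≠ 0) := by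
  intro n
  induction n with
  | zero => intro u v _ j; exact j.elim0
  | succ n ih =>
    intro u v hu j hagree hlt hgap
    have hβ0 : (0:ℝ) < β := by linarith
    have hpn : (0:ℝ) < β ^ n := by positivity
    set tu : Fin n → ℕ := fun i => u i.succ with htu_def
    set tv : Fin n → ℕ := fun i => v i.succ with htv_def
    have htu_adm : tu ∈ admWords β n := adm_tail hu
    have htu1 : bval β tu < 1 := (bval_lt_one hβ htu_adm).2
    have htu0 : (0:ℝ) ≤ bval β tu := bval_nonneg hβ _
    have htv0 : (0:ℝ) ≤ bval β tv := bval_nonneg hβ _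
    have hbu : bval β u = ((u 0 : ℝ) + bval β tu) / β := rfl
    have hbv : bval β v = ((v 0 : ℝ) + bval β tv) / β := rfl
    rcases Fin.eq_zero_or_eq_succ j with rfl | ⟨j', rfl⟩
    · -- first difference at position 0
      have h1 : (u 0 : ℝ) + 1 ≤ (v 0 : ℝ) := by exact_mod_cast hlt
      -- gap * β < β * (1/β^{n+1}) = 1/β^n
      have hE : (1:ℝ) + bval β tv - bval β tu < 1 / β ^ n := by
        have hg2 : ((v 0 : ℝ) + bval β tv) - ((u 0 : ℝ) + bval β tu) < β * (1 / β ^ (n+1)) := by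
          have h' := mul_lt_mul_of_pos_left hgap hβ0
          calc ((v 0 : ℝ) + bval β tv) - ((u 0 : ℝ) + bval β tu)
              = β * (bval β v - bval β u) := by
                rw [hbu, hbv]; field_simp
            _ < β * (1 / β ^ (n+1)) := h'
        have : β * (1 / β^(n+1)) = 1/β^n := by
          field_simp; ring
        rw [this] at hg2
        linarith
      have hnpos : 0 < n := by
        by_contra hn0
        have hn0' : n = 0 := by omega
        subst hn0'
        have e1 : bval β tu = 0 := bval_fin0 β tu
        have e2 : bval β tv = 0 := bval_fin0 β tv
        rw [e1, e2] at hE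
        norm_num at hE
      have htv_small : bval β tv < 1 / β ^ n := by linarith
      have htv_zero : ∀ i, tv i = 0 := small_imp_zero hβ n tv htv_small
      have hpow_le : (1:ℝ)/β^n ≤ 1/β := by
        apply div_le_div_of_nonneg_left one_pos.le hβ0
        calc (β:ℝ) = β^1 := (pow_one β).symm
          _ ≤ β^n := pow_le_pow_right₀ hβ.le hnpos
      have htu_pos : 0 < bval β tu := by
        have : (1:ℝ) - 1/β < bval β tu := by linarith
        have h2 : (0:ℝ) < 1 - 1/β := by
          rw [sub_pos, div_lt_one hβ0]; exact hβ
        linarith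
      obtain ⟨i, hi⟩ := exists_ne_zero_of_bval_pos hβ htu_pos
      refine ⟨by simp only [Fin.val_zero]; omega, ?_, ⟨i.succ, Fin.succ_pos i, hi⟩⟩
      intro i hi0
      rcases Fin.eq_zero_or_eq_succ i with rfl | ⟨i', rfl⟩
      · exact absurd hi0 (lt_irrefl _)
      · exact htv_zero i'
    · -- first difference at a successor position
      have h00 : u 0 = v 0 := hagree 0 (Fin.succ_pos j')
      have htagree : ∀ i, i < j' → tu i = tv i := by
        intro i hij
        exact hagree i.succ (by simpa [Fin.succ_lt_succ_iff] using hij)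
      have htlt : tu j' < tv j' := hlt
      have htgap : bval β tv - bval β tu < 1 / β ^ n := by
        have hg2 : bval β tv - bval β tu < β * (1 / β ^ (n+1)) := by
          have h' := mul_lt_mul_of_pos_left hgap hβ0
          have h00' : ((u 0 : ℝ)) = ((v 0 : ℝ)) := by exact_mod_cast h00
          calc bval β tv - bval β tu
              = β * (bval β v - bval β u) := by
                rw [hbu, hbv, h00']; field_simp; ring
            _ < β * (1 / β ^ (n+1)) := h'
        have : β * (1 / β^(n+1)) = 1/β^n := by
          field_simp; ring
        linarith [hg2, this ▸ hg2]
      obtain ⟨hj1, hzero, i0, hi0, hne⟩ := ih tu tv htu_adm j' htagree htlt htgap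
      refine ⟨?_, ?_, ⟨i0.succ, by simpa [Fin.succ_lt_succ_iff] using hi0, hne⟩⟩
      · have : (j'.succ : ℕ) = (j' : ℕ) + 1 := rfl
        omega
      · intro i hi
        rcases Fin.eq_zero_or_eq_succ i with rfl | ⟨i', rfl⟩
        · exact absurd hi (Fin.not_lt_zero _)
        · exact hzero i' (by simpa [Fin.succ_lt_succ_iff] using hi)

lemma mem_cyl_iff {β : ℝ} {n : ℕ} {w : Fin n → ℕ} {x : ℝ} :
    x ∈ cyl β w ↔ x ∈ Ico (0:ℝ) 1 ∧ dig β x n = w := by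
  constructor
  · rintro ⟨h1, h2⟩; exact ⟨h1, funext fun i => h2 i⟩
  · rintro ⟨h1, h2⟩; exact ⟨h1, fun i => congrFun h2 i⟩

lemma cyl_eq_Ico {β : ℝ} (hβ : 1 < β) {n : ℕ} {u v : Fin n → ℕ}
    (hu : u ∈ admWords β n) (hv : v ∈ admWords β n) (huv : wordLt u v)
    (hcons : ∀ w ∈ admWords β n, ¬(wordLt u w ∧ wordLt w v)) :
    cyl β u = Ico (bval β u) (bval β v) := by
  have hA : bval β u ∈ Ico (0:ℝ) 1 := bval_lt_one hβ hu
  have hB : bval β v ∈ Ico (0:ℝ) 1 := bval_lt_one hβ hv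
  have hdigA : dig β (bval β u) n = u := dig_bval hβ hu
  have hdigB : dig β (bval β v) n = v := dig_bval hβ hv
  ext x
  constructor
  · intro hx
    obtain ⟨hxI, hxd⟩ := mem_cyl_iff.mp hx
    constructor
    · calc bval β u = bval β (dig β x n) := by rw [hxd]
        _ ≤ x := bval_dig_le hβ n hxI
    · by_contra hBx
      push_neg at hBx
      rcases dig_mono hβ n hB hxI hBx with h | h
      · rw [hdigB, hxd] at h
        exact wordLt_irrefl u (h ▸ huv)
      · rw [hdigB, hxd] at h
        exact wordLt_asymm huv h
  · rintro ⟨hAx, hxB⟩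
    have hxI : x ∈ Ico (0:ℝ) 1 := ⟨le_trans hA.1 hAx, lt_trans hxB hB.2⟩
    have hwz_adm : dig β x n ∈ admWords β n := ⟨x, hxI, fun i => rfl⟩
    rcases dig_mono hβ n hA hxI hAx with h | h
    · exact mem_cyl_iff.mpr ⟨hxI, by rw [← hdigA, h]⟩
    · rw [hdigA] at h
      rcases dig_mono hβ n hxI hB hxB.le with h2 | h2
      · exfalso
        have : bval β (dig β x n) ≤ x := bval_dig_le hβ n hxI
        rw [h2, hdigB] at this
        exact absurd hxB (not_lt.mpr this)
      · rw [hdigB] at h2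
        exact absurd ⟨h, h2⟩ (hcons _ hwz_adm)

end B2

theorem full_among_consecutive (β : ℝ) (hβ : 1 < β) (n : ℕ) (hn : 1 ≤ n)
    (W : Fin (n + 1) → Fin n → ℕ)
    (hadm : ∀ k, W k ∈ admWords β n)
    (hmono : ∀ k l : Fin (n + 1), k < l → wordLt (W k) (W l))
    (hconsec : ∀ k : Fin n, ∀ v ∈ admWords β n,
        ¬(wordLt (W k.castSucc) v ∧ wordLt v (W k.succ))) :
    ∃ k, W k ∈ fullWords β n := by
  classical
  open BetaAux B2 in
  by_contra hfull
  push_neg at hfull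
  have hβ0 : (0:ℝ) < β := by linarith
  have hpn : (0:ℝ) < β ^ n := by positivity
  -- each gap is strictly less than β^{-n}
  have hgap : ∀ k : Fin n, bval β (W k.succ) - bval β (W k.castSucc) < 1 / β ^ n := by
    intro k
    have huv : wordLt (W k.castSucc) (W k.succ) := hmono _ _ (Fin.castSucc_lt_succ (i := k))
    have hcyl : cyl β (W k.castSucc)
        = Ico (bval β (W k.castSucc)) (bval β (W k.succ)) :=
      cyl_eq_Ico hβ (hadm _) (hadm _) huv (hconsec k)
    set A := bval β (W k.castSucc) with hA_def
    set B := bval β (W k.succ) with hB_def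
    have hmemA : A ∈ cyl β (W k.castSucc) :=
      mem_cyl_iff.mpr ⟨bval_lt_one hβ (hadm _), dig_bval hβ (hadm _)⟩
    have hAB : A < B := by
      rw [hcyl] at hmemA; exact hmemA.2
    have hub : B ≤ A + 1 / β ^ n := by
      by_contra hc
      push_neg at hc
      have hz : A + 1 / β ^ n ∈ cyl β (W k.castSucc) := by
        rw [hcyl]
        have h1 : (0:ℝ) < 1 / β ^ n := by positivity
        exact ⟨by linarith, hc⟩
      obtain ⟨hzI, hzd⟩ := mem_cyl_iff.mp hz
      have := lt_bval_dig_add hβ n hzI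
      rw [hzd, ← hA_def] at this
      linarith
    have hvol : volume (cyl β (W k.castSucc)) = ENNReal.ofReal (B - A) := by
      rw [hcyl, Real.volume_Ico]
    have hne : B - A ≠ 1 / β ^ n := by
      intro he
      apply hfull k.castSucc
      exact ⟨hadm _, by rw [hvol, he]⟩
    have : B - A ≤ 1 / β ^ n := by linarith
    exact lt_of_le_of_ne this hne
  -- extract the first-difference indices
  have hkey : ∀ k : Fin n, ∃ j : Fin n,
      ((j:ℕ) + 1 < n ∧ (∀ i, j < i → W k.succ i = 0) ∧ ∃ i, j < i ∧ W k.castSucc i ≠ 0) := by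
    intro k
    obtain ⟨j, hag, hlt⟩ := hmono _ _ (Fin.castSucc_lt_succ (i := k))
    exact ⟨j, key hβ n _ _ (hadm _) j hag hlt (hgap k)⟩
  choose j hj using hkey
  -- strict decrease of the index
  have hdec : ∀ (t : ℕ) (ht : t + 1 < n),
      j ⟨t + 1, ht⟩ < j ⟨t, by omega⟩ := by
    intro t ht
    set k : Fin n := ⟨t, by omega⟩
    set k' : Fin n := ⟨t + 1, ht⟩
    have hcs : k'.castSucc = k.succ := by
      apply Fin.ext; simp [Fin.val_succ]; rfl
    obtain ⟨-, hzero, -⟩ := hj k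
    obtain ⟨-, -, i, hi, hne⟩ := hj k'
    rw [hcs] at hne
    have hile : ¬ (j k < i) := fun hc => hne (hzero i hc)
    push_neg at hile
    exact lt_of_lt_of_le hi hile
  -- counting contradiction
  have hcount : ∀ (t : ℕ) (ht : t < n), ((j ⟨t, ht⟩ : ℕ)) + t + 1 < n := by
    intro t
    induction t with
    | zero => intro ht; simpa using (hj ⟨0, ht⟩).1
    | succ t ih =>
      intro ht
      have ht' : t < n := by omega
      have h1 := hdec t ht
      have h2 := ih ht'
      have h3 : ((j ⟨t+1, ht⟩ : ℕ)) < ((j ⟨t, ht'⟩ : ℕ)) := h1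
      omega
  have hlast := hcount (n - 1) (by omega)
  omega
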